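/- Let π = r_0 ⋯ r_n be a closed finite trace over U and let M = (S,P,μ) be a finite-state Markov chain over U. Then L(M,π) ≥ L(M',π) for every finite-state Markov chain M' over U if and only if the following three conditions hold: (i) μ(r_0) = 1; (ii) the set of states of M reachable from r_0 (via transitions of positive probability) equals S_π; and (iii) P(r,r') = P_π(r,r') for all r, r' ∈ S_π. -/

import Mathlib

open Finset

/-- A finite-state Markov chain over the state universe `U`: a finite nonempty
set `S` of states, a transition probability matrix `P` supported in `S × S`
whose rows (indexed by states of `S`) sum to `1`, and an initial probability
distribution `μ` supported in `S`. -/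
structure FinMC (U : Type*) where
  S : Finset U
  S_ne : S.Nonempty
  P : U → U → ℝ
  P_nonneg : ∀ a b, 0 ≤ P a b
  P_le_one : ∀ a b, P a b ≤ 1
  P_zero : ∀ a b, a ∉ S ∨ b ∉ S → P a b = 0
  P_row : ∀ a ∈ S, ∑ b ∈ S, P a b = 1
  μ : U → ℝ
  μ_nonneg : ∀ a, 0 ≤ μ a
  μ_zero : ∀ a, a ∉ S → μ a = 0
  μ_sum : ∑ a ∈ S, μ a = 1

/-- The likelihood `L(M, π) = μ(r 0) · ∏_{i=1}^{n} P(r (i-1), r i)` that the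
chain `M` generates the finite trace `π = r 0 ⋯ r n`. -/
def FinMC.lik {U : Type*} (M : FinMC U) (r : ℕ → U) (n : ℕ) : ℝ :=
  M.μ (r 0) * ∏ i ∈ range n, M.P (r i) (r (i + 1))

/-- `traceT r n a b` is the number of indices `0 ≤ i ≤ n - 1` with
`r i = a` and `r (i+1) = b`, i.e. the number of occurrences of the
transition `(a, b)` in the trace `r 0 ⋯ r n`. -/
def traceT {U : Type*} [DecidableEq U] (r : ℕ → U) (n : ℕ) (a b : U) : ℕ :=
  ((range n).filter (fun i => r i = a ∧ r (i + 1) = b)).card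

/-- The set of states `{r 0, …, r n}` occurring in the trace `r 0 ⋯ r n`. -/
def traceStates {U : Type*} [DecidableEq U] (r : ℕ → U) (n : ℕ) : Finset U :=
  (range (n + 1)).image r

/-- The empirical transition matrix of the trace `r 0 ⋯ r n`:
`P_π(a, b) = T_π(a, b) / ∑_{c} T_π(a, c)`. -/
noncomputable def traceP {U : Type*} [DecidableEq U] (r : ℕ → U) (n : ℕ) (a b : U) : ℝ :=
  (traceT r n a b : ℝ) / ∑ c ∈ traceStates r n, (traceT r n a c : ℝ)

/-- The likelihood `L(M_π, π)` that the induced chain `M_π` generates `π`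
(the initial distribution of `M_π` gives probability 1 to `r 0`). -/
noncomputable def traceLik {U : Type*} [DecidableEq U] (r : ℕ → U) (n : ℕ) : ℝ :=
  ∏ i ∈ range n, traceP r n (r i) (r (i + 1))

/-- `M.reach a b`: state `b` is reachable from `a` in `M` via transitions of
positive probability. -/
def FinMC.reach {U : Type*} (M : FinMC U) : U → U → Prop :=
  Relation.ReflTransGen (fun a b => 0 < M.P a b)

open Finset

section Aux
variable {U : Type*} [DecidableEq U] (r : ℕ → U) (n : ℕ)

lemma mem_traceStates {j : ℕ} (hj : j ≤ n) : r j ∈ traceStates r n :=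
  Finset.mem_image.2 ⟨j, Finset.mem_range.2 (Nat.lt_succ_of_le hj), rfl⟩

/-- total outgoing count from `a` equals number of indices `i < n` with `r i = a`. -/
lemma sum_traceT (a : U) :
    ∑ b ∈ traceStates r n, traceT r n a b = ((range n).filter (fun i => r i = a)).card := by
  rw [Finset.card_eq_sum_card_fiberwise
    (f := fun i => r (i + 1)) (t := traceStates r n)
    (fun i hi => mem_traceStates r n (Nat.succ_le_of_lt (Finset.mem_range.1 (Finset.mem_filter.1 hi).1)))]
  refine Finset.sum_congr rfl fun b _ => ?_
  rw [traceT, Finset.filter_filter]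

lemma outT_pos (hclosed : ∃ i < n, r i = r n) {a : U} (ha : a ∈ traceStates r n) :
    0 < ((range n).filter (fun i => r i = a)).card := by
  rw [Finset.card_pos]
  obtain ⟨j, hj, rfl⟩ := Finset.mem_image.1 ha
  rcases Nat.lt_succ_iff_lt_or_eq.1 (Finset.mem_range.1 hj) with h | h
  · exact ⟨j, Finset.mem_filter.2 ⟨Finset.mem_range.2 h, rfl⟩⟩
  · obtain ⟨i, hi, hri⟩ := hclosed
    exact ⟨i, Finset.mem_filter.2 ⟨Finset.mem_range.2 hi, by rw [hri, h]⟩⟩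

/-- Group a product along the trace by transitions. -/
lemma prod_trace_eq (f : U → U → ℝ) :
    ∏ i ∈ range n, f (r i) (r (i + 1)) =
      ∏ a ∈ traceStates r n, ∏ b ∈ traceStates r n, f a b ^ traceT r n a b := by
  have hmap : ∀ i ∈ range n, (r i, r (i + 1)) ∈ traceStates r n ×ˢ traceStates r n := by
    intro i hi
    have hi' := Finset.mem_range.1 hi
    exact Finset.mk_mem_product (mem_traceStates r n hi'.le)
      (mem_traceStates r n (Nat.succ_le_of_lt hi'))
  rw [← Finset.prod_fiberwise_of_maps_to hmap (fun i => f (r i) (r (i + 1))),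
    Finset.prod_product]
  refine Finset.prod_congr rfl fun a _ => Finset.prod_congr rfl fun b _ => ?_
  rw [traceT]
  have : ∀ i ∈ (range n).filter (fun i => (r i, r (i + 1)) = (a, b)),
      f (r i) (r (i + 1)) = f a b := by
    intro i hi
    have h := (Finset.mem_filter.1 hi).2
    obtain ⟨h1, h2⟩ := Prod.mk.inj h
    rw [h1, h2]
  rw [Finset.prod_congr rfl this, Finset.prod_const]
  congr 1
  exact congrArg Finset.card (Finset.filter_congr fun i _ => by rw [Prod.mk.injEq])

end Aux
section Aux2
variable {U : Type*} [DecidableEq U] (r : ℕ → U) (n : ℕ)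

lemma traceT_eq_zero_right {a b : U} (hb : b ∉ traceStates r n) : traceT r n a b = 0 := by
  rw [traceT, Finset.card_eq_zero, Finset.filter_eq_empty_iff]
  intro i hi hcon
  exact hb (hcon.2 ▸ mem_traceStates r n (Nat.succ_le_of_lt (Finset.mem_range.1 hi)))

lemma traceT_eq_zero_left {a b : U} (ha : a ∉ traceStates r n) : traceT r n a b = 0 := by
  rw [traceT, Finset.card_eq_zero, Finset.filter_eq_empty_iff]
  intro i hi hcon
  exact ha (hcon.1 ▸ mem_traceStates r n (Finset.mem_range.1 hi).le)

lemma traceP_eq (a b : U) :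
    traceP r n a b =
      (traceT r n a b : ℝ) / (((range n).filter (fun i => r i = a)).card : ℝ) := by
  rw [traceP, ← Nat.cast_sum, sum_traceT]

lemma traceP_nonneg (a b : U) : 0 ≤ traceP r n a b := by
  rw [traceP_eq]; positivity

lemma traceP_pos (hclosed : ∃ i < n, r i = r n) {i : ℕ} (hi : i < n) :
    0 < traceP r n (r i) (r (i + 1)) := by
  rw [traceP_eq]
  apply div_pos
  · have : i ∈ (range n).filter (fun j => r j = r i ∧ r (j + 1) = r (i + 1)) :=
      Finset.mem_filter.2 ⟨Finset.mem_range.2 hi, rfl, rfl⟩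
    exact_mod_cast Finset.card_pos.2 ⟨i, this⟩
  · exact_mod_cast outT_pos r n hclosed (mem_traceStates r n hi.le)

lemma traceP_pos_of_ne {a b : U} (hT : traceT r n a b ≠ 0)
    (hN : 0 < ((range n).filter (fun i => r i = a)).card) : 0 < traceP r n a b := by
  rw [traceP_eq]
  exact div_pos (by exact_mod_cast Nat.pos_of_ne_zero hT) (by exact_mod_cast hN)

lemma sum_traceP (hclosed : ∃ i < n, r i = r n) {a : U} (ha : a ∈ traceStates r n) :
    ∑ b ∈ traceStates r n, traceP r n a b = 1 := by
  have hN := outT_pos r n hclosed ha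
  rw [Finset.sum_congr rfl (fun b _ => traceP_eq r n a b), ← Finset.sum_div,
    ← Nat.cast_sum, sum_traceT]
  exact div_self (by exact_mod_cast hN.ne')

lemma traceP_le_one (a b : U) : traceP r n a b ≤ 1 := by
  by_cases hb : b ∈ traceStates r n
  · rw [traceP]
    apply div_le_one_of_le₀
    · exact_mod_cast Finset.single_le_sum (f := fun c => (traceT r n a c : ℝ))
        (fun c _ => by positivity) hb
    · positivity
  · rw [traceP_eq, traceT_eq_zero_right r n hb, Nat.cast_zero, zero_div]
    exact zero_le_one

/-- Strict Gibbs inequality for one row. -/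
lemma row_lt (hclosed : ∃ i < n, r i = r n) {a : U} (ha : a ∈ traceStates r n)
    {x : U → ℝ} (hx0 : ∀ b ∈ traceStates r n, 0 ≤ x b)
    (hxs : ∑ b ∈ traceStates r n, x b ≤ 1)
    (hne : ∃ b ∈ traceStates r n, x b ≠ traceP r n a b) :
    ∏ b ∈ traceStates r n, x b ^ traceT r n a b <
      ∏ b ∈ traceStates r n, traceP r n a b ^ traceT r n a b := by
  set TS := traceStates r n with hTS
  set N := ((range n).filter (fun i => r i = a)).card with hNdef
  have hN : 0 < N := outT_pos r n hclosed ha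
  set s := TS.filter (fun b => traceT r n a b ≠ 0) with hs
  have hsub : s ⊆ TS := Finset.filter_subset _ _
  -- reduce both products to the support `s`
  have hredx : ∏ b ∈ TS, x b ^ traceT r n a b = ∏ b ∈ s, x b ^ traceT r n a b := by
    rw [hs, Finset.prod_filter_of_ne]
    intro b _ hb hTb
    exact hb (by rw [hTb, pow_zero])
  have hredw : ∏ b ∈ TS, traceP r n a b ^ traceT r n a b
      = ∏ b ∈ s, traceP r n a b ^ traceT r n a b := by
    rw [hs, Finset.prod_filter_of_ne]
    intro b _ hb hTb
    exact hb (by rw [hTb, pow_zero])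
  have hwpos : ∀ b ∈ s, 0 < traceP r n a b := by
    intro b hb
    exact traceP_pos_of_ne r n (Finset.mem_filter.1 hb).2 hN
  have hNne : ((N : ℝ)) ≠ 0 := by exact_mod_cast hN.ne'
  have hTsum : ∑ b ∈ s, (traceT r n a b : ℝ) = (N : ℝ) := by
    rw [hs, Finset.sum_filter_of_ne (fun b _ h => by exact_mod_cast h), ← Nat.cast_sum,
      sum_traceT]
  have hsle : ∑ b ∈ s, x b ≤ 1 :=
    le_trans (Finset.sum_le_sum_of_subset_of_nonneg hsub (fun b hb _ => hx0 b hb)) hxs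
  have hRpos : 0 < ∏ b ∈ s, traceP r n a b ^ traceT r n a b :=
    Finset.prod_pos fun b hb => pow_pos (hwpos b hb) _
  rw [hredx, hredw]
  by_cases hzero : ∃ b ∈ s, x b = 0
  · obtain ⟨b0, hb0, hxb0⟩ := hzero
    calc ∏ b ∈ s, x b ^ traceT r n a b = 0 := by
          apply Finset.prod_eq_zero hb0
          rw [hxb0]
          exact zero_pow (Finset.mem_filter.1 hb0).2
      _ < _ := hRpos
  · push_neg at hzero
    have hxpos : ∀ b ∈ s, 0 < x b := fun b hb => (hx0 b (hsub hb)).lt_of_ne' (hzero b hb)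
    -- per-term inequality
    have hterm : ∀ b ∈ s, (traceT r n a b : ℝ) * Real.log (x b) ≤
        (traceT r n a b : ℝ) * Real.log (traceP r n a b)
          + ((N : ℝ) * x b - (traceT r n a b : ℝ)) := by
      intro b hb
      have hT0 : (0:ℝ) < (traceT r n a b : ℝ) := by
        exact_mod_cast Nat.pos_of_ne_zero (Finset.mem_filter.1 hb).2
      have hw := hwpos b hb
      have hlog : Real.log (x b / traceP r n a b) ≤ x b / traceP r n a b - 1 :=
        Real.log_le_sub_one_of_pos (div_pos (hxpos b hb) hw)
      rw [Real.log_div (hxpos b hb).ne' hw.ne'] at hlog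
      have hPb : traceP r n a b = (traceT r n a b : ℝ) / (N : ℝ) := traceP_eq r n a b
      have h1 := mul_le_mul_of_nonneg_left hlog hT0.le
      have hcalc : (traceT r n a b : ℝ) * (x b / traceP r n a b - 1)
          = (N : ℝ) * x b - (traceT r n a b : ℝ) := by
        rw [hPb]; field_simp
      linarith [hcalc ▸ h1]
    -- strict part
    have hkey : ∑ b ∈ s, (traceT r n a b : ℝ) * Real.log (x b) <
        ∑ b ∈ s, (traceT r n a b : ℝ) * Real.log (traceP r n a b) := by
      obtain ⟨b0, hb0TS, hb0ne⟩ := hne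
      by_cases hb0s : b0 ∈ s
      · -- strict per-term at b0
        have hstrict : (traceT r n a b0 : ℝ) * Real.log (x b0) <
            (traceT r n a b0 : ℝ) * Real.log (traceP r n a b0)
              + ((N : ℝ) * x b0 - (traceT r n a b0 : ℝ)) := by
          have hT0 : (0:ℝ) < (traceT r n a b0 : ℝ) := by
            exact_mod_cast Nat.pos_of_ne_zero (Finset.mem_filter.1 hb0s).2
          have hw := hwpos b0 hb0s
          have hratio : x b0 / traceP r n a b0 ≠ 1 := by
            intro h
            exact hb0ne ((div_eq_one_iff_eq hw.ne').1 h)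
          have hlog : Real.log (x b0 / traceP r n a b0) < x b0 / traceP r n a b0 - 1 :=
            Real.log_lt_sub_one_of_pos (div_pos (hxpos b0 hb0s) hw) hratio
          rw [Real.log_div (hxpos b0 hb0s).ne' hw.ne'] at hlog
          have hPb : traceP r n a b0 = (traceT r n a b0 : ℝ) / (N : ℝ) := traceP_eq r n a b0
          have h1 := mul_lt_mul_of_pos_left hlog hT0
          have hcalc : (traceT r n a b0 : ℝ) * (x b0 / traceP r n a b0 - 1)
              = (N : ℝ) * x b0 - (traceT r n a b0 : ℝ) := by
            rw [hPb]; field_simp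
          linarith [hcalc ▸ h1]
        have h1 : ∑ b ∈ s, (traceT r n a b : ℝ) * Real.log (x b) <
            ∑ b ∈ s, ((traceT r n a b : ℝ) * Real.log (traceP r n a b)
              + ((N : ℝ) * x b - (traceT r n a b : ℝ))) :=
          Finset.sum_lt_sum hterm ⟨b0, hb0s, hstrict⟩
        have h2 : ∑ b ∈ s, ((traceT r n a b : ℝ) * Real.log (traceP r n a b)
              + ((N : ℝ) * x b - (traceT r n a b : ℝ)))
            = ∑ b ∈ s, (traceT r n a b : ℝ) * Real.log (traceP r n a b)
              + ((N : ℝ) * ∑ b ∈ s, x b - (N : ℝ)) := by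
          rw [Finset.sum_add_distrib, Finset.sum_sub_distrib, ← Finset.mul_sum, hTsum]
        have h3 : (N : ℝ) * ∑ b ∈ s, x b - (N : ℝ) ≤ 0 := by
          have : (N : ℝ) * ∑ b ∈ s, x b ≤ (N : ℝ) * 1 :=
            mul_le_mul_of_nonneg_left hsle (by positivity)
          linarith
        linarith [h1, h2 ▸ h1]
      · -- b0 outside support: mass leaks out
        have hT0 : traceT r n a b0 = 0 := by
          by_contra h
          exact hb0s (Finset.mem_filter.2 ⟨hb0TS, h⟩)
        have hw0 : traceP r n a b0 = 0 := by
          rw [traceP_eq, hT0, Nat.cast_zero, zero_div]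
        have hxb0 : 0 < x b0 := (hx0 b0 hb0TS).lt_of_ne' (by rw [hw0] at hb0ne; exact hb0ne)
        have hsub' : s ⊆ TS.erase b0 := fun b hb =>
          Finset.mem_erase.2 ⟨fun h => hb0s (h ▸ hb), hsub hb⟩
        have hslt : ∑ b ∈ s, x b < 1 := by
          have h1 : ∑ b ∈ s, x b ≤ ∑ b ∈ TS.erase b0, x b :=
            Finset.sum_le_sum_of_subset_of_nonneg hsub'
              (fun b hb _ => hx0 b (Finset.mem_of_mem_erase hb))
          have h2 : ∑ b ∈ TS.erase b0, x b + x b0 = ∑ b ∈ TS, x b :=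
            Finset.sum_erase_add TS x hb0TS
          linarith
        have h1 : ∑ b ∈ s, (traceT r n a b : ℝ) * Real.log (x b) ≤
            ∑ b ∈ s, ((traceT r n a b : ℝ) * Real.log (traceP r n a b)
              + ((N : ℝ) * x b - (traceT r n a b : ℝ))) :=
          Finset.sum_le_sum hterm
        have h2 : ∑ b ∈ s, ((traceT r n a b : ℝ) * Real.log (traceP r n a b)
              + ((N : ℝ) * x b - (traceT r n a b : ℝ)))
            = ∑ b ∈ s, (traceT r n a b : ℝ) * Real.log (traceP r n a b)
              + ((N : ℝ) * ∑ b ∈ s, x b - (N : ℝ)) := by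
          rw [Finset.sum_add_distrib, Finset.sum_sub_distrib, ← Finset.mul_sum, hTsum]
        have h3 : (N : ℝ) * ∑ b ∈ s, x b - (N : ℝ) < 0 := by
          have hNpos : (0:ℝ) < (N : ℝ) := by exact_mod_cast hN
          nlinarith
        linarith [h1, h2 ▸ h1]
    -- exponentiate
    have hex : ∀ (y : U → ℝ), (∀ b ∈ s, 0 < y b) →
        ∏ b ∈ s, y b ^ traceT r n a b =
          Real.exp (∑ b ∈ s, (traceT r n a b : ℝ) * Real.log (y b)) := by
      intro y hy
      rw [Real.exp_sum]
      refine Finset.prod_congr rfl fun b hb => ?_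
      rw [Real.exp_nat_mul, Real.exp_log (hy b hb)]
    rw [hex x hxpos, hex _ hwpos]
    exact Real.exp_lt_exp.2 hkey

/-- Gibbs inequality (non-strict) for one row. -/
lemma row_le (hclosed : ∃ i < n, r i = r n) {a : U} (ha : a ∈ traceStates r n)
    {x : U → ℝ} (hx0 : ∀ b ∈ traceStates r n, 0 ≤ x b)
    (hxs : ∑ b ∈ traceStates r n, x b ≤ 1) :
    ∏ b ∈ traceStates r n, x b ^ traceT r n a b ≤
      ∏ b ∈ traceStates r n, traceP r n a b ^ traceT r n a b := by
  by_cases h : ∃ b ∈ traceStates r n, x b ≠ traceP r n a b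
  · exact (row_lt r n hclosed ha hx0 hxs h).le
  · push_neg at h
    exact le_of_eq (Finset.prod_congr rfl fun b hb => by rw [h b hb])

end Aux2
section Aux3
variable {U : Type*} [DecidableEq U]

lemma FinMC.μ_le_one (M : FinMC U) (a : U) : M.μ a ≤ 1 := by
  by_cases h : a ∈ M.S
  · rw [← M.μ_sum]
    exact Finset.single_le_sum (fun b _ => M.μ_nonneg b) h
  · rw [M.μ_zero a h]; exact zero_le_one

lemma FinMC.rowsum_le (M : FinMC U) (t : Finset U) (a : U) : ∑ b ∈ t, M.P a b ≤ 1 := by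
  by_cases h : a ∈ M.S
  · have e1 : ∑ b ∈ t, M.P a b = ∑ b ∈ t ∩ M.S, M.P a b := by
      symm
      apply Finset.sum_subset Finset.inter_subset_left
      intro b hb hnb
      exact M.P_zero a b (Or.inr fun hbS => hnb (Finset.mem_inter.2 ⟨hb, hbS⟩))
    have e2 : ∑ b ∈ t ∩ M.S, M.P a b ≤ ∑ b ∈ M.S, M.P a b :=
      Finset.sum_le_sum_of_subset_of_nonneg Finset.inter_subset_right
        (fun b _ _ => M.P_nonneg a b)
    rw [e1]
    exact e2.trans (M.P_row a h).le
  · rw [Finset.sum_eq_zero fun b _ => M.P_zero a b (Or.inl h)]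
    exact zero_le_one

variable (r : ℕ → U) (n : ℕ)

lemma traceLik_pos (hclosed : ∃ i < n, r i = r n) : 0 < traceLik r n :=
  Finset.prod_pos fun i hi => traceP_pos r n hclosed (Finset.mem_range.1 hi)

lemma lik_le_traceLik (hclosed : ∃ i < n, r i = r n) (M' : FinMC U) :
    M'.lik r n ≤ traceLik r n := by
  rw [FinMC.lik, traceLik, prod_trace_eq r n M'.P, prod_trace_eq r n (traceP r n)]
  have hX : 0 ≤ ∏ a ∈ traceStates r n, ∏ b ∈ traceStates r n, M'.P a b ^ traceT r n a b :=
    Finset.prod_nonneg fun a _ =>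
      Finset.prod_nonneg fun b _ => pow_nonneg (M'.P_nonneg a b) _
  have h1 : ∏ a ∈ traceStates r n, ∏ b ∈ traceStates r n, M'.P a b ^ traceT r n a b ≤
      ∏ a ∈ traceStates r n, ∏ b ∈ traceStates r n, traceP r n a b ^ traceT r n a b :=
    Finset.prod_le_prod
      (fun a _ => Finset.prod_nonneg fun b _ => pow_nonneg (M'.P_nonneg a b) _)
      (fun a ha => row_le r n hclosed ha (fun b _ => M'.P_nonneg a b) (M'.rowsum_le _ a))
  calc M'.μ (r 0) * ∏ a ∈ traceStates r n, ∏ b ∈ traceStates r n, M'.P a b ^ traceT r n a b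
      ≤ 1 * ∏ a ∈ traceStates r n, ∏ b ∈ traceStates r n, traceP r n a b ^ traceT r n a b :=
        mul_le_mul (M'.μ_le_one _) h1 hX zero_le_one
    _ = _ := one_mul _

/-- The Markov chain induced by a closed trace. -/
noncomputable def traceMC (hclosed : ∃ i < n, r i = r n) : FinMC U where
  S := traceStates r n
  S_ne := ⟨r 0, mem_traceStates r n (Nat.zero_le n)⟩
  P := traceP r n
  P_nonneg := traceP_nonneg r n
  P_le_one := traceP_le_one r n
  P_zero := by
    intro a b h
    rcases h with h | h
    · rw [traceP_eq, traceT_eq_zero_left r n h, Nat.cast_zero, zero_div]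
    · rw [traceP_eq, traceT_eq_zero_right r n h, Nat.cast_zero, zero_div]
  P_row := fun a ha => sum_traceP r n hclosed ha
  μ := fun a => if a = r 0 then 1 else 0
  μ_nonneg := fun a => by split <;> norm_num
  μ_zero := fun a ha => by
    rw [if_neg]
    intro h
    exact ha (h ▸ mem_traceStates r n (Nat.zero_le n))
  μ_sum := by
    rw [Finset.sum_ite_eq' (traceStates r n) (r 0) (fun _ => (1:ℝ)),
      if_pos (mem_traceStates r n (Nat.zero_le n))]

lemma traceMC_lik (hclosed : ∃ i < n, r i = r n) :
    (traceMC r n hclosed).lik r n = traceLik r n := by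
  rw [FinMC.lik, traceLik]
  show (if r 0 = r 0 then (1:ℝ) else 0) * _ = _
  rw [if_pos rfl, one_mul]
  rfl

lemma TS_subset_S (hclosed : ∃ i < n, r i = r n) (M : FinMC U)
    (hiii : ∀ a ∈ traceStates r n, ∀ b ∈ traceStates r n, M.P a b = traceP r n a b) :
    traceStates r n ⊆ M.S := by
  intro c hc
  by_contra hcS
  obtain ⟨i, hi⟩ := Finset.card_pos.1 (outT_pos r n hclosed hc)
  have hi1 := Finset.mem_filter.1 hi
  have hin := Finset.mem_range.1 hi1.1
  have hd : 0 < traceP r n c (r (i + 1)) := by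
    rw [← hi1.2]
    exact traceP_pos r n hclosed hin
  have h1 : M.P c (r (i + 1)) = traceP r n c (r (i + 1)) :=
    hiii c hc _ (mem_traceStates r n (Nat.succ_le_of_lt hin))
  have h2 := M.P_zero c (r (i + 1)) (Or.inl hcS)
  rw [h2] at h1
  exact absurd h1.symm hd.ne'

lemma step_mem (hclosed : ∃ i < n, r i = r n) (M : FinMC U)
    (hiii : ∀ a ∈ traceStates r n, ∀ b ∈ traceStates r n, M.P a b = traceP r n a b)
    {a b : U} (ha : a ∈ traceStates r n) (hPab : 0 < M.P a b) : b ∈ traceStates r n := by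
  by_contra hb
  have hSsub := TS_subset_S r n hclosed M hiii
  have hbS : b ∈ M.S := by
    by_contra h
    exact hPab.ne' (M.P_zero a b (Or.inr h))
  have h1 : ∑ c ∈ traceStates r n, M.P a c = 1 := by
    rw [Finset.sum_congr rfl fun c hc => hiii a ha c hc]
    exact sum_traceP r n hclosed ha
  have h2 := M.P_row a (hSsub ha)
  have h3 : M.P a b + ∑ c ∈ traceStates r n, M.P a c ≤ ∑ c ∈ M.S, M.P a c := by
    rw [← Finset.sum_insert hb]
    exact Finset.sum_le_sum_of_subset_of_nonneg
      (Finset.insert_subset hbS hSsub) (fun c _ _ => M.P_nonneg a c)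
  linarith

lemma reach_eq_TS (hclosed : ∃ i < n, r i = r n) (M : FinMC U)
    (hiii : ∀ a ∈ traceStates r n, ∀ b ∈ traceStates r n, M.P a b = traceP r n a b) :
    {u | M.reach (r 0) u} = ↑(traceStates r n) := by
  ext u
  simp only [Set.mem_setOf_eq, Finset.coe_sort_coe, Finset.mem_coe]
  constructor
  · intro h
    induction h with
    | refl => exact mem_traceStates r n (Nat.zero_le n)
    | tail _ hP ih => exact step_mem r n hclosed M hiii ih hP
  · have key : ∀ j, j ≤ n → M.reach (r 0) (r j) := by
      intro j
      induction j with
      | zero => exact fun _ => Relation.ReflTransGen.refl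
      | succ k ih =>
        intro hj'
        have hk : k < n := Nat.lt_of_succ_le hj'
        refine Relation.ReflTransGen.tail (ih hk.le) ?_
        show 0 < M.P (r k) (r (k + 1))
        rw [hiii _ (mem_traceStates r n hk.le) _ (mem_traceStates r n hj')]
        exact traceP_pos r n hclosed hk
    intro hu
    obtain ⟨j, hj, rfl⟩ := Finset.mem_image.1 hu
    exact key j (Nat.lt_succ_iff.1 (Finset.mem_range.1 hj))

end Aux3
/-- Let `π = r 0 ⋯ r n` be a closed finite trace.
A finite-state Markov chain `M = (S, P, μ)` has maximum likelihood of
generating `π` iff (i) `μ (r 0) = 1`, (ii) the set of states of `M` reachable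
from `r 0` equals `S_π`, and (iii) `P` agrees with `P_π` on `S_π × S_π`. -/
theorem maxLik_iff {U : Type*} [DecidableEq U] (r : ℕ → U) (n : ℕ)
    (hclosed : ∃ i < n, r i = r n) (M : FinMC U) :
    (∀ M' : FinMC U, M'.lik r n ≤ M.lik r n) ↔
      (M.μ (r 0) = 1 ∧
       {u | M.reach (r 0) u} = ↑(traceStates r n) ∧
       ∀ a ∈ traceStates r n, ∀ b ∈ traceStates r n, M.P a b = traceP r n a b) := by
  have hTSr0 : r 0 ∈ traceStates r n := mem_traceStates r n (Nat.zero_le n)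
  have hLpos : 0 < traceLik r n := traceLik_pos r n hclosed
  constructor
  · intro H
    have hMle : M.lik r n ≤ traceLik r n := lik_le_traceLik r n hclosed M
    have hge : traceLik r n ≤ M.lik r n := by
      have h := H (traceMC r n hclosed)
      rwa [traceMC_lik r n hclosed] at h
    have hEq : M.lik r n = traceLik r n := le_antisymm hMle hge
    have hProdle : ∏ i ∈ range n, M.P (r i) (r (i + 1)) ≤ traceLik r n := by
      rw [traceLik, prod_trace_eq r n M.P, prod_trace_eq r n (traceP r n)]
      exact Finset.prod_le_prod
        (fun a _ => Finset.prod_nonneg fun b _ => pow_nonneg (M.P_nonneg a b) _)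
        (fun a ha => row_le r n hclosed ha (fun b _ => M.P_nonneg a b) (M.rowsum_le _ a))
    have hμ : M.μ (r 0) = 1 := by
      have h1 : traceLik r n ≤ M.μ (r 0) * traceLik r n := by
        calc traceLik r n = M.μ (r 0) * ∏ i ∈ range n, M.P (r i) (r (i + 1)) := hEq.symm
          _ ≤ M.μ (r 0) * traceLik r n :=
            mul_le_mul_of_nonneg_left hProdle (M.μ_nonneg _)
      have h2 := M.μ_le_one (r 0)
      nlinarith
    have hProdEq : ∏ i ∈ range n, M.P (r i) (r (i + 1)) = traceLik r n := by
      rw [FinMC.lik, hμ, one_mul] at hEq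
      exact hEq
    have hiii : ∀ a ∈ traceStates r n, ∀ b ∈ traceStates r n,
        M.P a b = traceP r n a b := by
      set TS := traceStates r n with hTSdef
      set F := fun a => ∏ b ∈ TS, M.P a b ^ traceT r n a b with hF
      set G := fun a => ∏ b ∈ TS, traceP r n a b ^ traceT r n a b with hG
      have hFG : ∀ a ∈ TS, F a ≤ G a := fun a ha =>
        row_le r n hclosed ha (fun b _ => M.P_nonneg a b) (M.rowsum_le _ a)
      have hF0 : ∀ a ∈ TS, 0 ≤ F a := fun a _ =>
        Finset.prod_nonneg fun b _ => pow_nonneg (M.P_nonneg a b) _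
      have hGpos : ∀ a ∈ TS, 0 < G a := by
        intro a ha
        refine Finset.prod_pos fun b _ => ?_
        rcases Nat.eq_zero_or_pos (traceT r n a b) with h | h
        · rw [h, pow_zero]; exact one_pos
        · exact pow_pos (traceP_pos_of_ne r n h.ne' (outT_pos r n hclosed ha)) _
      have hPG : ∏ a ∈ TS, F a = ∏ a ∈ TS, G a := by
        rw [hF, hG]
        rw [← prod_trace_eq r n M.P, ← prod_trace_eq r n (traceP r n), hProdEq, traceLik]
      have hFeq : ∀ a ∈ TS, F a = G a := by
        intro a ha
        by_contra hne
        have hlt : F a < G a := (hFG a ha).lt_of_ne hne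
        have hstrict : ∏ a ∈ TS, F a < ∏ a ∈ TS, G a := by
          calc ∏ a ∈ TS, F a = F a * ∏ c ∈ TS.erase a, F c :=
                (Finset.mul_prod_erase TS F ha).symm
            _ ≤ F a * ∏ c ∈ TS.erase a, G c := by
                apply mul_le_mul_of_nonneg_left _ (hF0 a ha)
                exact Finset.prod_le_prod
                  (fun c hc => hF0 c (Finset.mem_of_mem_erase hc))
                  (fun c hc => hFG c (Finset.mem_of_mem_erase hc))
            _ < G a * ∏ c ∈ TS.erase a, G c :=
                mul_lt_mul_of_pos_right hlt
                  (Finset.prod_pos fun c hc => hGpos c (Finset.mem_of_mem_erase hc))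
            _ = ∏ a ∈ TS, G a := Finset.mul_prod_erase TS G ha
        exact absurd hPG hstrict.ne
      intro a ha b hb
      by_contra hPb
      exact absurd (hFeq a ha)
        (row_lt r n hclosed ha (fun c _ => M.P_nonneg a c) (M.rowsum_le _ a) ⟨b, hb, hPb⟩).ne
    exact ⟨hμ, reach_eq_TS r n hclosed M hiii, hiii⟩
  · rintro ⟨hμ, -, hiii⟩
    intro M'
    have hM'le := lik_le_traceLik r n hclosed M'
    have hMeq : M.lik r n = traceLik r n := by
      rw [FinMC.lik, hμ, one_mul, traceLik]
      refine Finset.prod_congr rfl fun i hi => ?_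
      have hi' := Finset.mem_range.1 hi
      rw [hiii _ (mem_traceStates r n hi'.le) _ (mem_traceStates r n (Nat.succ_le_of_lt hi'))]
    linarith
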